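/- For 2 ≤ a ≤ b, the number of falling maximal chains of length a in P(a,b)* equals 2·C(b−a, a−2). -/

import Mathlib

/-- `x` properly divides `y` in `ℕ²`: each coordinate is zero in both or strictly smaller. -/
def pdiv (x y : ℕ × ℕ) : Prop :=
  ((x.1 = 0 ∧ y.1 = 0) ∨ x.1 < y.1) ∧ ((x.2 = 0 ∧ y.2 = 0) ∨ x.2 < y.2)

/-- Strict proper divisibility on `ℕ²`. -/
def plt (x y : ℕ × ℕ) : Prop := x ≠ y ∧ pdiv x y

/-- The proper divisibility order on `ℕ²`. -/
def ple (x y : ℕ × ℕ) : Prop := x = y ∨ pdiv x y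

/-- `y` covers `x` in the proper divisibility order on `ℕ²`. -/
def pcov (x y : ℕ × ℕ) : Prop := plt x y ∧ ∀ z, plt x z → ¬ plt z y

/-- The poset `P(a,b)` of proper divisors of `(a,b)` together with `(a,b)` itself. -/
def Pset (a b : ℕ) : Set (ℕ × ℕ) := {z | z = (a, b) ∨ pdiv z (a, b)}

/-- A border element: of the form `(1,m)`, `(m,1)`, `(0,m)` or `(m,0)` with `m ≥ 2`. -/
def border (p : ℕ × ℕ) : Prop :=
  (p.1 = 1 ∧ 2 ≤ p.2) ∨ (p.2 = 1 ∧ 2 ≤ p.1) ∨ (p.1 = 0 ∧ 2 ≤ p.2) ∨ (p.2 = 0 ∧ 2 ≤ p.1)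

/-- Decrease each nonzero coordinate by one (the lexicographically least atom below). -/
def pdec (p : ℕ × ℕ) : ℕ × ℕ := (p.1 - 1, p.2 - 1)

/-- `p 0 = (a,b) → p 1 → ⋯ → p k = (0,0)` is a falling maximal chain of length `k`
in the dual poset `P(a,b)*`: each step `p (i+1) ⋖ p i` is a cover in proper divisibility,
no step goes to the least atom `pdec (p i)`, and no interior element is a border element. -/
def FallingChain (a b k : ℕ) (p : ℕ → ℕ × ℕ) : Prop :=
  p 0 = (a, b) ∧ p k = (0, 0) ∧
  (∀ i, i < k → pcov (p (i + 1)) (p i)) ∧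
  (∀ i, i + 2 ≤ k → p (i + 1) ≠ pdec (p i)) ∧
  (∀ i, 1 ≤ i → i + 2 ≤ k → ¬ border (p i))

/-- A falling chain normalized to be `(0,0)` beyond index `k` (so chains are counted once). -/
def NormFallingChain (a b k : ℕ) (p : ℕ → ℕ × ℕ) : Prop :=
  FallingChain a b k p ∧ ∀ i, k ≤ i → p i = (0, 0)

def cfun (a b : ℕ) (S : Finset ℕ) (j : ℕ) : ℕ :=
  if j = 0 then b else (S.sort (· ≤ ·)).getD (a - 2 - j) 0 + 2 + (a - 2 - j)

def endPt (a b : ℕ) (S : Finset ℕ) (ε : Bool) : ℕ × ℕ :=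
  if ε then (1, 0) else if cfun a b S (a - 2) = 2 then (0, 1) else (1, 1)

def chainOf (a b : ℕ) (x : Bool × Finset ℕ) (i : ℕ) : ℕ × ℕ :=
  if i ≤ a - 2 then (a - i, cfun a b x.2 i)
  else if i = a - 1 then endPt a b x.2 x.1
  else (0, 0)

lemma sort_facts {n m : ℕ} {S : Finset ℕ} (hsub : S ⊆ Finset.range n) (hcard : S.card = m) :
    ((S.sort (· ≤ ·)).length = m) ∧
    (∀ j, j < m → (S.sort (· ≤ ·)).getD j 0 < n) ∧
    (∀ j, j + 1 < m → (S.sort (· ≤ ·)).getD j 0 < (S.sort (· ≤ ·)).getD (j + 1) 0) := by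
  have hlen : (S.sort (· ≤ ·)).length = m := by rw [Finset.length_sort, hcard]
  refine ⟨hlen, ?_, ?_⟩
  · intro j hj
    have hj' : j < (S.sort (· ≤ ·)).length := by omega
    rw [List.getD_eq_getElem _ _ hj']
    have hmem : (S.sort (· ≤ ·))[j] ∈ S :=
      (Finset.mem_sort (α := ℕ) (· ≤ ·)).1 (List.getElem_mem _)
    simpa using hsub hmem
  · intro j hj
    have h1 : j < (S.sort (· ≤ ·)).length := by omega
    have h2 : j + 1 < (S.sort (· ≤ ·)).length := by omega
    rw [List.getD_eq_getElem _ _ h1, List.getD_eq_getElem _ _ h2]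
    have := List.Pairwise.rel_get_of_lt (Finset.sortedLT_sort S).pairwise
      (a := ⟨j, h1⟩) (b := ⟨j + 1, h2⟩) (by simp)
    simpa using this

lemma cfun_facts {a b : ℕ} (ha : 2 ≤ a) (hab : a ≤ b) {S : Finset ℕ}
    (hsub : S ⊆ Finset.range (b - a)) (hcard : S.card = a - 2) :
    cfun a b S 0 = b ∧
    (∀ j, 1 ≤ j → j ≤ a - 2 → 2 ≤ cfun a b S j) ∧
    (∀ j, j + 1 ≤ a - 2 → cfun a b S (j + 1) + 2 ≤ cfun a b S j) := by
  obtain ⟨hlen, hmem, hmono⟩ := sort_facts hsub hcard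
  refine ⟨by simp [cfun], ?_, ?_⟩
  · intro j h1 h2
    rw [cfun, if_neg (by omega)]
    omega
  · intro j hj
    rcases Nat.eq_zero_or_pos j with rfl | hjpos
    · -- cfun 1 + 2 ≤ b
      rw [cfun, if_neg (by omega), cfun, if_pos rfl]
      have := hmem (a - 2 - (0 + 1)) (by omega)
      omega
    · rw [cfun, if_neg (by omega), cfun, if_neg (by omega)]
      have := hmono (a - 2 - (j + 1)) (by omega)
      have he : a - 2 - (j + 1) + 1 = a - 2 - j := by omega
      rw [he] at this
      omega

lemma pcov_step {x1 t s : ℕ} (h1 : 1 ≤ x1) (h2 : t < s) : pcov (x1, t) (x1 + 1, s) := by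
  constructor
  · simp only [plt, pdiv, ne_eq, Prod.mk.injEq, eq_self_iff_true, true_and, and_true, false_and,
      and_false, false_or, or_false, true_or, or_true, not_false_iff, not_true]
    omega
  · rintro ⟨z1, z2⟩ hz hzy
    simp only [plt, pdiv, ne_eq, Prod.mk.injEq, eq_self_iff_true, true_and, and_true, false_and,
      and_false, false_or, or_false, true_or, or_true, not_false_iff, not_true] at hz hzy
    omega

lemma pcov_0c {c d : ℕ} (hc : 1 ≤ c) : pcov (0, c) (d, c + 1) := by
  constructor
  · simp only [plt, pdiv, ne_eq, Prod.mk.injEq, eq_self_iff_true, true_and, and_true, false_and,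
      and_false, false_or, or_false, true_or, or_true, not_false_iff, not_true]
    omega
  · rintro ⟨z1, z2⟩ hz hzy
    simp only [plt, pdiv, ne_eq, Prod.mk.injEq, eq_self_iff_true, true_and, and_true, false_and,
      and_false, false_or, or_false, true_or, or_true, not_false_iff, not_true] at hz hzy
    omega

lemma pcov_00 {y1 y2 : ℕ} (h1 : y1 ≤ 1) (h2 : y2 ≤ 1) (h3 : y1 + y2 ≠ 0) :
    pcov (0, 0) (y1, y2) := by
  constructor
  · simp only [plt, pdiv, ne_eq, Prod.mk.injEq, eq_self_iff_true, true_and, and_true, false_and,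
      and_false, false_or, or_false, true_or, or_true, not_false_iff, not_true]
    omega
  · rintro ⟨z1, z2⟩ hz hzy
    simp only [plt, pdiv, ne_eq, Prod.mk.injEq, eq_self_iff_true, true_and, and_true, false_and,
      and_false, false_or, or_false, true_or, or_true, not_false_iff, not_true] at hz hzy
    omega

lemma cov_above_00 {y1 y2 : ℕ} (h : pcov (0, 0) (y1, y2)) :
    (y1 = 1 ∧ y2 = 1) ∨ (y1 = 1 ∧ y2 = 0) ∨ (y1 = 0 ∧ y2 = 1) := by
  obtain ⟨h1, h2⟩ := h
  have hc1 := h2 (1, y2 - 1)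
  have hc2 := h2 (y1 - 1, 1)
  simp only [plt, pdiv, ne_eq, Prod.mk.injEq, eq_self_iff_true, true_and, and_true, false_and,
    and_false, false_or, or_false, true_or, or_true, not_false_iff, not_true] at h1 hc1 hc2
  omega

lemma cov_above_01 {y1 y2 : ℕ} (h : pcov (0, 1) (y1, y2)) : y2 = 2 := by
  obtain ⟨h1, h2⟩ := h
  have hc1 := h2 (0, 2)
  simp only [plt, pdiv, ne_eq, Prod.mk.injEq, eq_self_iff_true, true_and, and_true, false_and,
    and_false, false_or, or_false, true_or, or_true, not_false_iff, not_true] at h1 hc1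
  omega

lemma chainOf_valid {a b : ℕ} (ha : 2 ≤ a) (hab : a ≤ b) {ε : Bool} {S : Finset ℕ}
    (hsub : S ⊆ Finset.range (b - a)) (hcard : S.card = a - 2) :
    NormFallingChain a b a (chainOf a b (ε, S)) := by
  obtain ⟨hc0, hc2, hcgap⟩ := cfun_facts ha hab hsub hcard
  have hcm : 2 ≤ cfun a b S (a - 2) := by
    by_cases h : a - 2 = 0
    · rw [h, hc0]; omega
    · exact hc2 _ (by omega) le_rfl
  have ez : ∀ i, a ≤ i → chainOf a b (ε, S) i = (0, 0) := by
    intro i hi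
    rw [chainOf, if_neg (by omega), if_neg (by omega)]
  have emid : ∀ i, i ≤ a - 2 → chainOf a b (ε, S) i = (a - i, cfun a b S i) := by
    intro i hi
    rw [chainOf, if_pos hi]
  have eend : chainOf a b (ε, S) (a - 1) = endPt a b S ε := by
    rw [chainOf, if_neg (by omega), if_pos rfl]
  refine ⟨⟨?_, ?_, ?_, ?_, ?_⟩, ez⟩
  · rw [emid 0 (by omega), hc0]; simp
  · exact ez a le_rfl
  · -- covers
    intro i hi
    rcases Nat.lt_or_ge (i + 1) (a - 1) with hcase | hcase
    · -- i + 1 ≤ a - 2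
      have h1 : i + 1 ≤ a - 2 := by omega
      rw [emid (i + 1) h1, emid i (by omega)]
      have hst : a - i = (a - (i + 1)) + 1 := by omega
      rw [hst]
      exact pcov_step (by omega) (by have := hcgap i h1; omega)
    · by_cases hlast : i = a - 1
      · subst hlast
        rw [eend, show a - 1 + 1 = a by omega, ez a le_rfl]
        rcases ε with _ | _
        · rw [endPt]
          simp only [Bool.false_eq_true, if_false]
          by_cases hcc : cfun a b S (a - 2) = 2
          · rw [if_pos hcc]; exact pcov_00 (by omega) (by omega) (by omega)
          · rw [if_neg hcc]; exact pcov_00 (by omega) (by omega) (by omega)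
        · rw [endPt, if_pos rfl]; exact pcov_00 (by omega) (by omega) (by omega)
      · -- i = a - 2, i + 1 = a - 1
        have hia : i = a - 2 := by omega
        have hi1 : i + 1 = a - 1 := by omega
        rw [hi1, eend, emid i (by omega), hia, show a - (a - 2) = 1 + 1 by omega]
        rcases ε with _ | _
        · rw [endPt]
          simp only [Bool.false_eq_true, if_false]
          by_cases hcc : cfun a b S (a - 2) = 2
          · rw [if_pos hcc, hcc]
            exact pcov_0c (by omega)
          · rw [if_neg hcc]
            exact pcov_step le_rfl (by omega)
        · rw [endPt, if_pos rfl]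
          exact pcov_step le_rfl (by omega)
  · -- pdec
    intro i hi
    rcases Nat.lt_or_ge (i + 1) (a - 1) with hcase | hcase
    · have h1 : i + 1 ≤ a - 2 := by omega
      rw [emid (i + 1) h1, emid i (by omega), pdec]
      have := hcgap i h1
      have hb2 : 2 ≤ cfun a b S i := by
        by_cases h0 : i = 0
        · subst h0; rw [hc0]; omega
        · exact hc2 i (by omega) (by omega)
      simp only [ne_eq, Prod.mk.injEq, not_and]
      intro _
      omega
    · have hia : i = a - 2 := by omega
      have hi1 : i + 1 = a - 1 := by omega
      rw [hi1, eend, emid i (by omega), hia, pdec]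
      simp only
      rcases ε with _ | _
      · rw [endPt]
        simp only [Bool.false_eq_true, if_false]
        by_cases hcc : cfun a b S (a - 2) = 2
        · rw [if_pos hcc]
          simp only [ne_eq, Prod.mk.injEq, not_and]
          omega
        · rw [if_neg hcc]
          simp only [ne_eq, Prod.mk.injEq, not_and]
          omega
      · rw [endPt, if_pos rfl]
        simp only [ne_eq, Prod.mk.injEq, not_and]
        omega
  · -- border
    intro i h1 h2
    rw [emid i (by omega)]
    have := hc2 i h1 (by omega)
    simp only [border, not_or]
    refine ⟨?_, ?_, ?_, ?_⟩ <;> simp only [not_and] <;> omega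

lemma endPt_snd (a b : ℕ) (S : Finset ℕ) (ε : Bool) :
    (endPt a b S ε).2 = if ε then 0 else 1 := by
  rcases ε with _ | _
  · rw [endPt]
    simp only [Bool.false_eq_true, if_false]
    split <;> rfl
  · rw [endPt, if_pos rfl]; rfl

lemma chainOf_inj {a b : ℕ} (ha : 2 ≤ a) (hab : a ≤ b) {ε ε' : Bool} {S S' : Finset ℕ}
    (hsub : S ⊆ Finset.range (b - a)) (hcard : S.card = a - 2)
    (hsub' : S' ⊆ Finset.range (b - a)) (hcard' : S'.card = a - 2)
    (h : chainOf a b (ε, S) = chainOf a b (ε', S')) : ε = ε' ∧ S = S' := by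
  obtain ⟨hlen, _, _⟩ := sort_facts hsub hcard
  obtain ⟨hlen', _, _⟩ := sort_facts hsub' hcard'
  constructor
  · have h1 := congrFun h (a - 1)
    rw [chainOf, chainOf, if_neg (by omega), if_pos rfl, if_neg (by omega), if_pos rfl] at h1
    have h2 := congrArg Prod.snd h1
    rw [endPt_snd, endPt_snd] at h2
    rcases ε with _ | _ <;> rcases ε' with _ | _ <;> simp_all
  · have hLL : S.sort (· ≤ ·) = S'.sort (· ≤ ·) := by
      apply List.ext_getElem (by omega)
      intro j hj1 hj2
      have hj : j < a - 2 := by omega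
      have h1 := congrFun h (a - 2 - j)
      rw [chainOf, chainOf, if_pos (by omega), if_pos (by omega)] at h1
      have h2 := congrArg Prod.snd h1
      simp only at h2
      rw [cfun, cfun, if_neg (by omega), if_neg (by omega)] at h2
      have he : a - 2 - (a - 2 - j) = j := by omega
      rw [he] at h2
      have g1 : (S.sort (· ≤ ·)).getD j 0 = (S.sort (· ≤ ·))[j] :=
        List.getD_eq_getElem (S.sort (· ≤ ·)) 0 hj1
      have g2 : (S'.sort (· ≤ ·)).getD j 0 = (S'.sort (· ≤ ·))[j] :=
        List.getD_eq_getElem (S'.sort (· ≤ ·)) 0 hj2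
      omega
    have := congrArg List.toFinset hLL
    rwa [Finset.sort_toFinset, Finset.sort_toFinset] at this

lemma fst_down {a : ℕ} {p : ℕ → ℕ × ℕ}
    (hpd : ∀ i, i < a → pdiv (p (i + 1)) (p i))
    (hub : ∀ i, i ≤ a → (p i).1 ≤ a - i)
    {i0 : ℕ} (hi0 : i0 ≤ a - 1) (ha : 1 ≤ a) (hbase : (p i0).1 = a - i0) :
    ∀ i, i ≤ i0 → (p i).1 = a - i := by
  have key : ∀ j, j ≤ i0 → (p (i0 - j)).1 = a - (i0 - j) := by
    intro j
    induction j with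
    | zero => intro _; simpa using hbase
    | succ n ih =>
      intro hn
      have h1 := ih (by omega)
      have h2 := (hpd (i0 - (n + 1)) (by omega)).1
      rw [show i0 - (n + 1) + 1 = i0 - n by omega] at h2
      have h5 := hub (i0 - (n + 1)) (by omega)
      omega
  intro i hi
  have := key (i0 - i) (by omega)
  rwa [show i0 - (i0 - i) = i by omega] at this

lemma chain_struct {a b : ℕ} (ha : 2 ≤ a) (hab : a ≤ b) {p : ℕ → ℕ × ℕ}
    (hp : NormFallingChain a b a p) :
    ∃ ε S, S ⊆ Finset.range (b - a) ∧ S.card = a - 2 ∧ chainOf a b (ε, S) = p := by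
  obtain ⟨⟨h0, hk, hcov, hdec, hbor⟩, hnorm⟩ := hp
  have hpd : ∀ i, i < a → pdiv (p (i + 1)) (p i) := fun i hi => (hcov i hi).1.2
  have hub : ∀ i, i ≤ a → (p i).1 ≤ a - i := by
    intro i
    induction i with
    | zero => intro _; rw [h0]; show a ≤ a - 0; omega
    | succ n ih =>
      intro hn
      have h1 := (hpd n (by omega)).1
      have h2 := ih (by omega)
      omega
  have hlast : p (a - 1) = (1, 1) ∨ p (a - 1) = (1, 0) ∨ p (a - 1) = (0, 1) := by
    have hc := hcov (a - 1) (by omega)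
    rw [show a - 1 + 1 = a by omega, hk] at hc
    have h2 := cov_above_00 (y1 := (p (a - 1)).1) (y2 := (p (a - 1)).2)
      (by rwa [Prod.mk.eta])
    rcases h2 with ⟨u, v⟩ | ⟨u, v⟩ | ⟨u, v⟩
    · left; rw [← Prod.mk.eta (p := p (a - 1)), u, v]
    · right; left; rw [← Prod.mk.eta (p := p (a - 1)), u, v]
    · right; right; rw [← Prod.mk.eta (p := p (a - 1)), u, v]
  have hbm2 : p (a - 1) = (0, 1) → ((p (a - 2)).1 = 2 ∧ (p (a - 2)).2 = 2) := by
    intro hE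
    have hc := hcov (a - 2) (by omega)
    rw [show a - 2 + 1 = a - 1 by omega, hE] at hc
    have h2 : (p (a - 2)).2 = 2 := cov_above_01 (y1 := (p (a - 2)).1) (y2 := (p (a - 2)).2)
      (by rwa [Prod.mk.eta])
    refine ⟨?_, h2⟩
    have hu := hub (a - 2) (by omega)
    rcases Nat.lt_or_ge ((p (a - 2)).1) 2 with hlt | hge
    · exfalso
      by_cases ha3 : 3 ≤ a
      · have hb := hbor (a - 2) (by omega) (by omega)
        apply hb
        rw [border]
        omega
      · have haa : a = 2 := by omega
        subst haa
        rw [h0] at hlt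
        simp at hlt
    · omega
  have hfst : ∀ i, i ≤ a - 2 → (p i).1 = a - i := by
    rcases hlast with hE | hE | hE
    · exact fun i hi => fst_down hpd hub (i0 := a - 1) (by omega) (by omega)
        (by rw [hE]; show (1 : ℕ) = a - (a - 1); omega) i (by omega)
    · exact fun i hi => fst_down hpd hub (i0 := a - 1) (by omega) (by omega)
        (by rw [hE]; show (1 : ℕ) = a - (a - 1); omega) i (by omega)
    · exact fun i hi => fst_down hpd hub (i0 := a - 2) (by omega) (by omega)
        (by rw [(hbm2 hE).1]; omega) i hi
  have hb0 : (p 0).2 = b := by rw [h0]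
  have hbge : ∀ i, 1 ≤ i → i ≤ a - 2 → 2 ≤ (p i).2 := by
    intro i h1 h2
    have hb := hbor i h1 (by omega)
    have hf := hfst i h2
    rw [border] at hb
    omega
  have hbm : 2 ≤ (p (a - 2)).2 := by
    by_cases h3 : 3 ≤ a
    · exact hbge (a - 2) (by omega) le_rfl
    · have haa : a = 2 := by omega
      subst haa
      show 2 ≤ (p 0).2
      omega
  have hgap : ∀ i, i + 1 ≤ a - 2 → (p (i + 1)).2 + 2 ≤ (p i).2 := by
    intro i h1
    have hd := hdec i (by omega)
    have hplt2 := (hpd i (by omega)).2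
    have hf1 := hfst i (by omega)
    have hf2 := hfst (i + 1) h1
    have hge := hbge (i + 1) (by omega) h1
    rw [pdec, ne_eq, ← Prod.mk.eta (p := p (i + 1)), Prod.mk.injEq] at hd
    omega
  set g : ℕ → ℕ := fun j => (p (a - 2 - j)).2 - (2 + j) with hg
  have hlow : ∀ t, t < a - 2 → 2 + 2 * t ≤ (p (a - 2 - t)).2 := by
    intro t
    induction t with
    | zero => intro _; simpa using hbm
    | succ n ih =>
      intro hn
      have h1 := ih (by omega)
      have h2 := hgap (a - 2 - (n + 1)) (by omega)
      rw [show a - 2 - (n + 1) + 1 = a - 2 - n by omega] at h2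
      omega
  have hup : ∀ i, i ≤ a - 2 → (p i).2 + 2 * i ≤ b := by
    intro i
    induction i with
    | zero => intro _; omega
    | succ n ih =>
      intro hn
      have h1 := hgap n (by omega)
      have h2 := ih (by omega)
      omega
  have hadj : ∀ j, j + 1 < a - 2 → g j < g (j + 1) := by
    intro j hj
    have h1 := hgap (a - 2 - (j + 1)) (by omega)
    rw [show a - 2 - (j + 1) + 1 = a - 2 - j by omega] at h1
    have h2 := hlow j (by omega)
    have h3 := hlow (j + 1) (by omega)
    simp only [hg]
    omega
  have hmono : ∀ j1 j2, j1 < j2 → j2 < a - 2 → g j1 < g j2 := by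
    intro j1 j2 h12 h2
    induction j2 with
    | zero => omega
    | succ n ih =>
      rcases Nat.lt_succ_iff_lt_or_eq.1 h12 with h | h
      · exact lt_trans (ih h (by omega)) (hadj n (by omega))
      · subst h; exact hadj j1 (by omega)
  set S : Finset ℕ := (Finset.range (a - 2)).image g with hS
  have hinj : Set.InjOn g (Finset.range (a - 2)) := by
    intro x hx y hy hxy
    simp only [Finset.coe_range, Set.mem_Iio] at hx hy
    by_contra hne
    rcases Nat.lt_or_ge x y with h | h
    · exact absurd hxy (ne_of_lt (hmono x y h hy))
    · exact absurd hxy.symm (ne_of_lt (hmono y x (by omega) hx))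
  have hScard : S.card = a - 2 := by
    rw [hS, Finset.card_image_of_injOn hinj, Finset.card_range]
  have hSsub : S ⊆ Finset.range (b - a) := by
    intro x hx
    rw [hS, Finset.mem_image] at hx
    obtain ⟨j, hj, rfl⟩ := hx
    rw [Finset.mem_range] at hj ⊢
    have h1 := hlow j hj
    have h2 := hup (a - 2 - j) (by omega)
    simp only [hg]
    omega
  have hnodup : ((List.range (a - 2)).map g).Nodup := by
    refine List.Nodup.map_on ?_ List.nodup_range
    intro x hx y hy hxy
    exact hinj (Finset.mem_coe.2 (Finset.mem_range.2 (List.mem_range.1 hx)))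
      (Finset.mem_coe.2 (Finset.mem_range.2 (List.mem_range.1 hy))) hxy
  have hsorted : List.Pairwise (· ≤ ·) ((List.range (a - 2)).map g) := by
    rw [List.pairwise_iff_getElem]
    intro i j hi hj hij
    simp only [List.length_map, List.length_range] at hi hj
    simp only [List.getElem_map, List.getElem_range]
    exact le_of_lt (hmono i j hij hj)
  have hsort : S.sort (· ≤ ·) = (List.range (a - 2)).map g := by
    have hTF : ((List.range (a - 2)).map g).toFinset = S := by
      ext x
      simp [hS, List.mem_toFinset, List.mem_map, List.mem_range, Finset.mem_image,
        Finset.mem_range]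
    rw [← hTF]
    exact (List.toFinset_sort (· ≤ ·) hnodup).2 hsorted
  have hcf : ∀ i, i ≤ a - 2 → cfun a b S i = (p i).2 := by
    intro i hi
    rcases Nat.eq_zero_or_pos i with rfl | hpos
    · rw [cfun, if_pos rfl, hb0]
    · rw [cfun, if_neg (by omega)]
      have hidx : a - 2 - i < a - 2 := by omega
      have hgd : (S.sort (· ≤ ·)).getD (a - 2 - i) 0 = g (a - 2 - i) := by
        rw [hsort]
        rw [List.getD_eq_getElem _ _ (by simp only [List.length_map, List.length_range]; omega)]
        simp only [List.getElem_map, List.getElem_range]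
      rw [hgd]
      have h1 := hlow (a - 2 - i) hidx
      rw [show a - 2 - (a - 2 - i) = i by omega] at h1
      simp only [hg]
      rw [show a - 2 - (a - 2 - i) = i by omega]
      omega
  have hmain : ∀ ε : Bool, endPt a b S ε = p (a - 1) → chainOf a b (ε, S) = p := by
    intro ε hE
    funext i
    rcases Nat.lt_or_ge (a - 2) i with h | h
    · by_cases h1 : i = a - 1
      · subst h1; rw [chainOf, if_neg (by omega), if_pos rfl]; exact hE
      · rw [chainOf, if_neg (by omega), if_neg h1]
        exact (hnorm i (by omega)).symm
    · rw [chainOf]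
      simp only
      rw [if_pos h, hcf i h]
      rw [Prod.ext_iff]
      exact ⟨by simpa using (hfst i h).symm, rfl⟩
  have hf2' : (p (a - 2)).1 = 2 := by have := hfst (a - 2) le_rfl; omega
  rcases hlast with hE | hE | hE
  · have hd := hdec (a - 2) (by omega)
    rw [show a - 2 + 1 = a - 1 by omega, hE, pdec] at hd
    have hbm3 : (p (a - 2)).2 ≠ 2 := by
      intro hc
      apply hd
      rw [hf2', hc]
    refine ⟨false, S, hSsub, hScard, hmain false ?_⟩
    rw [endPt]
    simp only [Bool.false_eq_true, if_false]
    rw [if_neg (by rw [hcf (a - 2) le_rfl]; exact hbm3)]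
    exact hE.symm
  · exact ⟨true, S, hSsub, hScard, hmain true (by rw [endPt, if_pos rfl]; exact hE.symm)⟩
  · refine ⟨false, S, hSsub, hScard, hmain false ?_⟩
    rw [endPt]
    simp only [Bool.false_eq_true, if_false]
    rw [if_pos (by rw [hcf (a - 2) le_rfl]; exact (hbm2 hE).2)]
    exact hE.symm


theorem stmt12 (a b : ℕ) (ha : 2 ≤ a) (hab : a ≤ b) :
    {p : ℕ → ℕ × ℕ | NormFallingChain a b a p}.ncard = 2 * Nat.choose (b - a) (a - 2) := by
  classical
  have hset : {p : ℕ → ℕ × ℕ | NormFallingChain a b a p}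
      = ↑((({false, true} : Finset Bool) ×ˢ (Finset.range (b - a)).powersetCard (a - 2)).image
          (fun x => chainOf a b x)) := by
    ext p
    simp only [Set.mem_setOf_eq, Finset.coe_image, Set.mem_image, Finset.mem_coe,
      Finset.mem_product, Finset.mem_powersetCard, Finset.mem_insert, Finset.mem_singleton]
    constructor
    · intro hp
      obtain ⟨ε, S, h1, h2, h3⟩ := chain_struct ha hab hp
      exact ⟨(ε, S), ⟨by rcases ε <;> simp, h1, h2⟩, h3⟩
    · rintro ⟨⟨ε, S⟩, ⟨-, hsub, hcard⟩, rfl⟩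
      exact chainOf_valid ha hab hsub hcard
  rw [hset, Set.ncard_coe_finset]
  have hinj : Set.InjOn (fun x => chainOf a b x)
      ↑((({false, true} : Finset Bool) ×ˢ (Finset.range (b - a)).powersetCard (a - 2))) := by
    rintro ⟨ε, S⟩ h1 ⟨ε', S'⟩ h2 h
    simp only [Finset.coe_product, Set.mem_prod, Finset.mem_coe, Finset.mem_powersetCard] at h1 h2
    obtain ⟨he, hs⟩ := chainOf_inj ha hab h1.2.1 h1.2.2 h2.2.1 h2.2.2 h
    simp [Prod.ext_iff, he, hs]
  rw [Finset.card_image_of_injOn hinj, Finset.card_product, Finset.card_powersetCard,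
    Finset.card_range]
  norm_num
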